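/- There exists an equilibrium value vector, i.e. a vector v* ∈ ℝ^n with T(v*) = v*. -/

import Mathlib

open Finset Filter

/-- The value-update map of the trading network model:
`T_i(v) = -c_i + max{ max_{j ∈ N(i)} (π_{ij} v_i + (1-π_{ij}) v_j), u_i }`. -/
noncomputable def T {n : ℕ} (N : Fin n → Finset (Fin n)) (hN : ∀ i, (N i).Nonempty)
    (c u : Fin n → ℝ) (π : Fin n → Fin n → ℝ) (v : Fin n → ℝ) (i : Fin n) : ℝ :=
  -c i + max ((N i).sup' (hN i) fun j => π i j * v i + (1 - π i j) * v j) (u i)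

/-- Existence of an equilibrium value vector: there is a vector `v` with `T v = v`. -/
theorem equilibrium_exists {n : ℕ} (hn : 1 ≤ n)
    (N : Fin n → Finset (Fin n)) (hN : ∀ i, (N i).Nonempty)
    (c u : Fin n → ℝ) (π : Fin n → Fin n → ℝ)
    (hc : ∀ i, 0 < c i) (hπ : ∀ i j, π i j ∈ Set.Ioo (0 : ℝ) 1) :
    ∃ v : Fin n → ℝ, T N hN c u π v = v := by
  haveI : NeZero n := ⟨by omega⟩
  set F := T N hN c u π with hF
  -- monotonicity
  have mono : ∀ v w : Fin n → ℝ, v ≤ w → F v ≤ F w := by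
    intro v w hvw i
    refine add_le_add le_rfl (max_le_max ?_ le_rfl)
    refine Finset.sup'_mono_fun fun j hj => ?_
    have h1 := (hπ i j).1.le
    have h2 : (0:ℝ) ≤ 1 - π i j := by linarith [(hπ i j).2.le]
    exact add_le_add (mul_le_mul_of_nonneg_left (hvw i) h1)
      (mul_le_mul_of_nonneg_left (hvw j) h2)
  -- lower bound
  have lower : ∀ v i, u i - c i ≤ F v i := by
    intro v i
    have : u i ≤ max ((N i).sup' (hN i) fun j => π i j * v i + (1 - π i j) * v j) (u i) :=
      le_max_right _ _
    simp only [hF, T]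
    linarith
  -- starting point
  set R := Finset.univ.sup' (univ_nonempty (α := Fin n)) u with hR
  set v0 : Fin n → ℝ := fun _ => R with hv0
  have hstep : F v0 ≤ v0 := by
    intro i
    have hsup : ((N i).sup' (hN i) fun j => π i j * v0 i + (1 - π i j) * v0 j) = R := by
      apply le_antisymm
      · refine Finset.sup'_le _ _ fun j hj => ?_
        simp only [hv0]; ring_nf; rfl
      · obtain ⟨j, hj⟩ := hN i
        refine le_trans ?_ (Finset.le_sup' _ hj)
        simp only [hv0]; ring_nf; rfl
    have hu : u i ≤ R := Finset.le_sup' u (Finset.mem_univ i)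
    show F v0 i ≤ R
    simp only [hF, T, hsup, max_eq_left hu]
    linarith [hc i]
  -- the iterates
  set a : ℕ → Fin n → ℝ := fun k => F^[k] v0 with ha
  have hsucc : ∀ k, a (k + 1) = F (a k) := by
    intro k; simp [ha, Function.iterate_succ_apply']
  have hanti : ∀ k, a (k + 1) ≤ a k := by
    intro k
    induction k with
    | zero => simpa [ha] using hstep
    | succ m ih =>
      have h := mono _ _ ih
      rwa [← hsucc, ← hsucc] at h
  have hantitone : ∀ i, Antitone fun k => a k i := by
    intro i
    refine antitone_nat_of_succ_le fun k => ?_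
    exact hanti k i
  have hbdd : ∀ i, BddBelow (Set.range fun k => a k i) := by
    intro i
    refine ⟨min R (u i - c i), ?_⟩
    rintro x ⟨k, rfl⟩
    cases k with
    | zero => simp [ha, hv0]
    | succ m =>
      refine le_trans (min_le_right _ _) ?_
      show u i - c i ≤ a (m + 1) i
      rw [hsucc]; exact lower _ i
  set vs : Fin n → ℝ := fun i => ⨅ k, a k i with hvs
  have hconv : ∀ i, Tendsto (fun k => a k i) atTop (nhds (vs i)) := by
    intro i
    exact tendsto_atTop_ciInf (hantitone i) (hbdd i)
  have hconvPi : Tendsto a atTop (nhds vs) := tendsto_pi_nhds.2 hconv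
  -- continuity of F
  have hcont : Continuous F := by
    refine continuous_pi fun i => ?_
    refine Continuous.add continuous_const (Continuous.max ?_ continuous_const)
    refine Continuous.finset_sup'_apply (hN i) fun j hj => ?_
    exact ((continuous_const.mul (continuous_apply i)).add
      (continuous_const.mul (continuous_apply j)))
  have h1 : Tendsto (fun k => a (k + 1)) atTop (nhds vs) :=
    hconvPi.comp (tendsto_add_atTop_nat 1)
  have h2 : Tendsto (fun k => F (a k)) atTop (nhds (F vs)) :=
    (hcont.tendsto vs).comp hconvPi
  have : F vs = vs := by
    refine tendsto_nhds_unique ?_ h1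
    simpa only [hsucc] using h2
  exact ⟨vs, this⟩
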